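/- Let A = ⟨X⟩ and B = ⟨Y⟩ be finitely generated groups with symmetric generating sets X and Y, n ≥ 2, and let G_n = A(n)B be their n-th nilpotent product, generated by X ∪ Y. If A = C_A(B) or B = C_B(A), then max{pw(A, X), pw(B, Y)} ≤ pw(G_n, X ∪ Y) ≤ pw(A, X) + pw(B, Y). -/

import Mathlib

open Monoid

section PalindromicWidth

/-- `g` is a palindrome with respect to the (symmetric) generating set `X`:
some word over `X` representing `g` equals its own reverse. -/
def IsPalindrome {G : Type*} [Group G] (X : Set G) (g : G) : Prop :=
  ∃ w : List G, (∀ a ∈ w, a ∈ X) ∧ w.reverse = w ∧ w.prod = g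

/-- The palindromic length of `g` with respect to `X`, valued in `ℕ∞`:
the least `k` such that `g` is a product of `k` palindromes. -/
noncomputable def palLength {G : Type*} [Group G] (X : Set G) (g : G) : ℕ∞ :=
  sInf {k : ℕ∞ | ∃ L : List G, (L.length : ℕ∞) = k ∧ (∀ p ∈ L, IsPalindrome X p) ∧ L.prod = g}

/-- The palindromic width `pw(G, X) = sup_{g ∈ G} l_P(g)`, valued in `ℕ∞`. -/
noncomputable def palWidth (G : Type*) [Group G] (X : Set G) : ℕ∞ :=
  ⨆ g : G, palLength X g

end PalindromicWidth

section AuxLemmas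

lemma palLength_le {G : Type*} [Group G] (X : Set G) (g : G) (L : List G)
    (h1 : ∀ p ∈ L, IsPalindrome X p) (h2 : L.prod = g) :
    palLength X g ≤ L.length := sInf_le ⟨L, rfl, h1, h2⟩

lemma exists_decomp {G : Type*} [Group G] (X : Set G) (g : G) (h : palLength X g ≠ ⊤) :
    ∃ L : List G, (L.length : ℕ∞) = palLength X g ∧ (∀ p ∈ L, IsPalindrome X p) ∧ L.prod = g := by
  have hne : {k : ℕ∞ | ∃ L : List G, (L.length : ℕ∞) = k ∧ (∀ p ∈ L, IsPalindrome X p) ∧ L.prod = g}.Nonempty := by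
    by_contra hc
    rw [Set.not_nonempty_iff_eq_empty] at hc
    exact h (by simp [palLength, hc])
  have := csInf_mem hne
  obtain ⟨L, hL⟩ := this
  exact ⟨L, hL⟩

lemma prod_filter_eq {G : Type*} [Group G] (l : List G) (p : G → Bool)
    (h : ∀ a ∈ l, p a = false → a = 1) : (l.filter p).prod = l.prod := by
  induction l with
  | nil => rfl
  | cons a t ih =>
    have ht : ∀ b ∈ t, p b = false → b = 1 := fun b hb => h b (List.mem_cons_of_mem a hb)
    by_cases hp : p a
    · simp [List.filter_cons, hp, ih ht]
    · have ha1 : a = 1 := h a List.mem_cons_self (by simpa using hp)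
      rw [List.filter_cons, if_neg (by simpa using hp), ih ht, ha1, List.prod_cons, one_mul]

lemma isPalindrome_map {G H : Type*} [Group G] [Group H] (f : G →* H) (X : Set G) (Z : Set H)
    (hf : ∀ x ∈ X, f x ∈ Z ∨ f x = 1) {g : G} (hg : IsPalindrome X g) :
    IsPalindrome Z (f g) := by
  classical
  obtain ⟨w, hw, hrev, hprod⟩ := hg
  refine ⟨(w.map f).filter (fun a => decide (a ∈ Z)), ?_, ?_, ?_⟩
  · intro a ha
    rw [List.mem_filter] at ha
    simpa using ha.2
  · rw [← List.filter_reverse, ← List.map_reverse, hrev]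
  · rw [prod_filter_eq]
    · rw [← hprod]; exact (map_list_prod f w).symm
    · intro a ha hpa
      obtain ⟨x, hx, rfl⟩ := List.mem_map.mp ha
      rcases hf x (hw x hx) with h1 | h1
      · simp [h1] at hpa
      · exact h1

lemma palLength_map_le {G H : Type*} [Group G] [Group H] (f : G →* H) (X : Set G) (Z : Set H)
    (hf : ∀ x ∈ X, f x ∈ Z ∨ f x = 1) (g : G) :
    palLength Z (f g) ≤ palLength X g := by
  by_cases h : palLength X g = ⊤
  · simp [h]
  obtain ⟨L, hlen, hpal, hprod⟩ := exists_decomp X g h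
  calc palLength Z (f g) ≤ ((L.map f).length : ℕ∞) := by
        refine palLength_le _ _ _ ?_ ?_
        · intro p hp
          obtain ⟨q, hq, rfl⟩ := List.mem_map.mp hp
          exact isPalindrome_map f X Z hf (hpal q hq)
        · rw [← hprod]; exact (map_list_prod f L).symm
    _ = palLength X g := by rw [List.length_map]; exact hlen

lemma palLength_mul_le {G : Type*} [Group G] (X : Set G) (g h : G) :
    palLength X (g * h) ≤ palLength X g + palLength X h := by
  by_cases h1 : palLength X g = ⊤
  · simp [h1]
  by_cases h2 : palLength X h = ⊤
  · simp [h2]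
  obtain ⟨L, hL1, hL2, hL3⟩ := exists_decomp X g h1
  obtain ⟨M, hM1, hM2, hM3⟩ := exists_decomp X h h2
  calc palLength X (g * h) ≤ ((L ++ M).length : ℕ∞) := by
        refine palLength_le _ _ _ ?_ ?_
        · intro p hp
          rcases List.mem_append.mp hp with hp | hp
          exacts [hL2 p hp, hM2 p hp]
        · rw [List.prod_append, hL3, hM3]
    _ = palLength X g + palLength X h := by
        rw [List.length_append, Nat.cast_add, hL1, hM1]
end AuxLemmas

section NilpotentProduct

variable (A B : Type*) [Group A] [Group B] (n : ℕ)

/-- The Cartesian subgroup `[A,B]` of the free product `A ∗ B`: the kernel of the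
natural homomorphism `A ∗ B →* A × B`. -/
def cartesianSubgroup : Subgroup (Coprod A B) := MonoidHom.ker (Coprod.toProd)

/-- The normal subgroup `[A,B] ∩ γ_{n+1}(A ∗ B)` defining the `n`-th nilpotent product.
(Here `lowerCentralSeries H n = γ_{n+1}(H)` since Mathlib's indexing starts at `0`.) -/
def nilProdKer : Subgroup (Coprod A B) :=
  cartesianSubgroup A B ⊓ (⊤ : Subgroup (Coprod A B)).lowerCentralSeries n

instance : (nilProdKer A B n).Normal := by
  have h1 : (cartesianSubgroup A B).Normal := MonoidHom.normal_ker _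
  have h2 : ((⊤ : Subgroup (Coprod A B)).lowerCentralSeries n).Normal := inferInstance
  exact Subgroup.normal_inf_normal _ _

/-- The `n`-th nilpotent product `A(n)B = (A ∗ B) / ([A,B] ∩ γ_{n+1}(A ∗ B))`. -/
abbrev NilProd := Coprod A B ⧸ nilProdKer A B n

/-- The canonical embedding of `A` into `A(n)B`. -/
def nilProdInl : A →* NilProd A B n := (QuotientGroup.mk' _).comp Coprod.inl

/-- The canonical embedding of `B` into `A(n)B`. -/
def nilProdInr : B →* NilProd A B n := (QuotientGroup.mk' _).comp Coprod.inr

/-- `C_A(B)`: the centralizer of (the canonical copy of) `B`, as a subgroup of `A`. -/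
def CA : Subgroup A :=
  (Subgroup.centralizer (Set.range (nilProdInr A B n))).comap (nilProdInl A B n)

/-- `C_B(A)`: the centralizer of (the canonical copy of) `A`, as a subgroup of `B`. -/
def CB : Subgroup B :=
  (Subgroup.centralizer (Set.range (nilProdInl A B n))).comap (nilProdInr A B n)

end NilpotentProduct

/-- Theorem 2(ii): if `A = C_A(B)` or `B = C_B(A)` then
`max{pw(A,X), pw(B,Y)} ≤ pw(G_n, X ∪ Y) ≤ pw(A,X) + pw(B,Y)`. -/
theorem pw_nilProd_central_case (A B : Type*) [Group A] [Group B] (n : ℕ) (hn : 2 ≤ n)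
    (X : Set A) (Y : Set B) (hXsym : X⁻¹ = X) (hYsym : Y⁻¹ = Y)
    (hXfin : X.Finite) (hYfin : Y.Finite)
    (hXgen : Subgroup.closure X = ⊤) (hYgen : Subgroup.closure Y = ⊤)
    (hcent : CA A B n = ⊤ ∨ CB A B n = ⊤) :
    max (palWidth A X) (palWidth B Y) ≤
        palWidth (NilProd A B n) (nilProdInl A B n '' X ∪ nilProdInr A B n '' Y) ∧
      palWidth (NilProd A B n) (nilProdInl A B n '' X ∪ nilProdInr A B n '' Y) ≤
        palWidth A X + palWidth B Y := by
  set ι := nilProdInl A B n with hι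
  set κ := nilProdInr A B n with hκ
  set XY : Set (NilProd A B n) := ι '' X ∪ κ '' Y with hXY
  -- projections
  have hker : ∀ x ∈ nilProdKer A B n, ((MonoidHom.fst A B).comp Coprod.toProd) x = 1 := by
    intro x hx
    have h1 : Coprod.toProd x = 1 := hx.1
    simp only [MonoidHom.comp_apply, h1, map_one]
  have hker' : ∀ x ∈ nilProdKer A B n, ((MonoidHom.snd A B).comp Coprod.toProd) x = 1 := by
    intro x hx
    have h1 : Coprod.toProd x = 1 := hx.1
    simp only [MonoidHom.comp_apply, h1, map_one]
  set pA : NilProd A B n →* A := QuotientGroup.lift _ _ hker with hpA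
  set pB : NilProd A B n →* B := QuotientGroup.lift _ _ hker' with hpB
  have hpAι : ∀ a : A, pA (ι a) = a := by intro a; rfl
  have hpAκ : ∀ b : B, pA (κ b) = 1 := by intro b; rfl
  have hpBι : ∀ a : A, pB (ι a) = 1 := by intro a; rfl
  have hpBκ : ∀ b : B, pB (κ b) = b := by intro b; rfl
  constructor
  · apply max_le
    · refine iSup_le fun a => ?_
      have h1 : palLength X (pA (ι a)) ≤ palLength XY (ι a) := by
        refine palLength_map_le pA XY X ?_ (ι a)
        rintro x (⟨x₀, hx₀, rfl⟩ | ⟨y₀, hy₀, rfl⟩)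
        · left; rw [hpAι]; exact hx₀
        · right; exact hpAκ y₀
      rw [hpAι] at h1
      exact h1.trans (le_iSup (fun g => palLength XY g) (ι a))
    · refine iSup_le fun b => ?_
      have h1 : palLength Y (pB (κ b)) ≤ palLength XY (κ b) := by
        refine palLength_map_le pB XY Y ?_ (κ b)
        rintro x (⟨x₀, hx₀, rfl⟩ | ⟨y₀, hy₀, rfl⟩)
        · right; exact hpBι x₀
        · left; rw [hpBκ]; exact hy₀
      rw [hpBκ] at h1
      exact h1.trans (le_iSup (fun g => palLength XY g) (κ b))
  · -- upper bound
    have hcomm : ∀ (a : A) (b : B), ι a * κ b = κ b * ι a := by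
      rcases hcent with h | h
      · intro a b
        have ha : a ∈ CA A B n := h ▸ Subgroup.mem_top a
        have := (Subgroup.mem_centralizer_iff.mp (Subgroup.mem_comap.mp ha)) (κ b) ⟨b, rfl⟩
        exact this.symm
      · intro a b
        have hb : b ∈ CB A B n := h ▸ Subgroup.mem_top b
        exact (Subgroup.mem_centralizer_iff.mp (Subgroup.mem_comap.mp hb)) (ι a) ⟨a, rfl⟩
    have hdec : ∀ g : NilProd A B n, ∃ (a : A) (b : B), g = ι a * κ b := by
      intro g
      obtain ⟨w, rfl⟩ := QuotientGroup.mk'_surjective (nilProdKer A B n) g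
      induction w using Coprod.induction_on with
      | inl a => exact ⟨a, 1, by simp [hι, nilProdInl]⟩
      | inr b => exact ⟨1, b, by simp [hκ, nilProdInr]⟩
      | mul x y hx hy =>
        obtain ⟨a1, b1, h1⟩ := hx
        obtain ⟨a2, b2, h2⟩ := hy
        refine ⟨a1 * a2, b1 * b2, ?_⟩
        rw [map_mul, h1, h2, map_mul, map_mul, mul_assoc, ← mul_assoc (κ b1),
          ← hcomm a2 b1, mul_assoc (ι a2), ← mul_assoc]
    refine iSup_le fun g => ?_
    obtain ⟨a, b, rfl⟩ := hdec g
    have h1 : palLength XY (ι a * κ b) ≤ palLength XY (ι a) + palLength XY (κ b) :=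
      palLength_mul_le XY (ι a) (κ b)
    have h2 : palLength XY (ι a) ≤ palLength X a := by
      refine palLength_map_le ι X XY ?_ a
      intro x hx; left; exact Or.inl ⟨x, hx, rfl⟩
    have h3 : palLength XY (κ b) ≤ palLength Y b := by
      refine palLength_map_le κ Y XY ?_ b
      intro y hy; left; exact Or.inr ⟨y, hy, rfl⟩
    refine h1.trans (add_le_add (h2.trans ?_) (h3.trans ?_))
    · exact le_iSup (fun a => palLength X a) a
    · exact le_iSup (fun b => palLength Y b) b
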